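/- The bilinear form (f, g)_q = CT(f · g^♣ · Π_{1≤i<j≤n}(1-xᵢ/xⱼ)/(1-qxᵢ/xⱼ)) on Laurent polynomials is symmetric: (f, g)_q = (g, f)_q. -/

import Mathlib

open scoped Classical

/-- Pairs `i < j` of `Fin n`, indexing the expansion variables `u_{ij} = xᵢ/xⱼ`. -/
abbrev ThetaPairs (n : ℕ) := {p : Fin n × Fin n // p.1 < p.2}

/-- The kernel `Θ = Π_{i<j} (1-xᵢ/xⱼ)/(1-q xᵢ/xⱼ)`, expanded as a formal power series
in the variables `u_{ij} = xᵢ/xⱼ` (for `i < j`). -/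
noncomputable def thetaKernel (n : ℕ) (K : Type*) [Field K] (q : K) :
    MvPowerSeries (ThetaPairs n) K :=
  ∏ p : ThetaPairs n,
    (1 - MvPowerSeries.X p) * (1 - MvPowerSeries.C q * MvPowerSeries.X p)⁻¹

/-- The exponent of `xᵢ` in the monomial `Π u_{jk}^{d(j,k)}`. -/
noncomputable def expVec {n : ℕ} (d : ThetaPairs n →₀ ℕ) (i : Fin n) : ℤ :=
  ∑ p : ThetaPairs n,
    (d p : ℤ) * ((if p.1.1 = i then 1 else 0) - (if p.1.2 = i then 1 else 0))

/-- The iterated constant term `CT(x^u Θ)`. -/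
noncomputable def ctTheta (n : ℕ) (K : Type*) [Field K] (q : K) (u : Fin n → ℤ) : K :=
  finsum (fun d : ThetaPairs n →₀ ℕ =>
    if ∀ i, u i + expVec d i = 0 then MvPowerSeries.coeff d (thetaKernel n K q) else 0)

/-- The bilinear form `(f, g)_q = CT(f g^♣ Θ)` on Laurent polynomials
(`f, g : (Fin n → ℤ) →₀ K`, a monomial `x^v` with coefficient `c` being the finitely
supported function sending `v` to `c`); `♣` sends `xᵢ ↦ 1/x_{n+1-i}`, so the monomial
`x^w` of `g` contributes through `(x^w)^♣ = x^{w♣}` with `w♣ i = -w (rev i)`. -/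
noncomputable def thetaPairing (n : ℕ) (K : Type*) [Field K] (q : K)
    (f g : (Fin n → ℤ) →₀ K) : K :=
  f.sum fun v cv => g.sum fun w cw =>
    cv * cw * ctTheta n K q (fun i => v i - w (Fin.rev i))

section Reindex

variable {σ : Type*} {K : Type*} [Field K]

lemma emd_add (e : σ ≃ σ) (a b : σ →₀ ℕ) :
    Finsupp.equivMapDomain e (a + b)
      = Finsupp.equivMapDomain e a + Finsupp.equivMapDomain e b := by
  ext x; simp [Finsupp.equivMapDomain_apply]

lemma emd_cancel (e : σ ≃ σ) (a b : σ →₀ ℕ)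
    (h : Finsupp.equivMapDomain e a = Finsupp.equivMapDomain e b) : a = b := by
  have := congrArg (Finsupp.equivMapDomain e.symm) h
  rwa [← Finsupp.equivMapDomain_trans, ← Finsupp.equivMapDomain_trans,
    Equiv.self_trans_symm, Finsupp.equivMapDomain_refl, Finsupp.equivMapDomain_refl] at this

/-- Reindexing a multivariate power series along an equiv of the variables. -/
noncomputable def psReindexFun (e : σ ≃ σ) (F : MvPowerSeries σ K) : MvPowerSeries σ K :=
  fun d => F (Finsupp.equivMapDomain e d)

lemma psReindexFun_coeff (e : σ ≃ σ) (F : MvPowerSeries σ K) (d : σ →₀ ℕ) :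
    MvPowerSeries.coeff d (psReindexFun e F)
      = MvPowerSeries.coeff (Finsupp.equivMapDomain e d) F := rfl

lemma psReindexFun_mul (e : σ ≃ σ) (F G : MvPowerSeries σ K) :
    psReindexFun e (F * G) = psReindexFun e F * psReindexFun e G := by
  classical
  apply MvPowerSeries.ext
  intro d
  rw [psReindexFun_coeff, MvPowerSeries.coeff_mul, MvPowerSeries.coeff_mul]
  refine (Finset.sum_equiv
    (Equiv.prodCongr (Finsupp.equivCongrLeft e) (Finsupp.equivCongrLeft e)) ?_ ?_).symm
  · intro p
    simp only [Finset.mem_antidiagonal, Finset.HasAntidiagonal.mem_antidiagonal, Equiv.prodCongr_apply, Prod.map,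
      Finsupp.equivCongrLeft_apply]
    constructor
    · intro h; rw [← emd_add, h]
    · intro h
      refine emd_cancel e _ _ ?_
      rw [emd_add, h]
  · intro p _; rfl

/-- Reindexing as a ring equivalence. -/
noncomputable def psReindex (e : σ ≃ σ) : MvPowerSeries σ K ≃+* MvPowerSeries σ K where
  toFun := psReindexFun e
  invFun := psReindexFun e.symm
  left_inv F := by
    funext d
    show F (Finsupp.equivMapDomain e (Finsupp.equivMapDomain e.symm d)) = F d
    rw [← Finsupp.equivMapDomain_trans, Equiv.symm_trans_self, Finsupp.equivMapDomain_refl]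
  right_inv F := by
    funext d
    show F (Finsupp.equivMapDomain e.symm (Finsupp.equivMapDomain e d)) = F d
    rw [← Finsupp.equivMapDomain_trans, Equiv.self_trans_symm, Finsupp.equivMapDomain_refl]
  map_add' F G := rfl
  map_mul' F G := psReindexFun_mul e F G

lemma psReindex_X (e : σ ≃ σ) (p : σ) :
    psReindex (K := K) e (MvPowerSeries.X p) = MvPowerSeries.X (e.symm p) := by
  apply MvPowerSeries.ext
  intro d
  show MvPowerSeries.coeff (Finsupp.equivMapDomain e d) (MvPowerSeries.X p)
      = MvPowerSeries.coeff d (MvPowerSeries.X (e.symm p))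
  rw [MvPowerSeries.coeff_X, MvPowerSeries.coeff_X]
  congr 1
  apply propext
  constructor
  · intro h
    refine emd_cancel e _ _ ?_
    rw [h, Finsupp.equivMapDomain_single, Equiv.apply_symm_apply]
  · intro h
    rw [h, Finsupp.equivMapDomain_single, Equiv.apply_symm_apply]

lemma psReindex_C (e : σ ≃ σ) (a : K) :
    psReindex (K := K) e (MvPowerSeries.C a) = MvPowerSeries.C a := by
  apply MvPowerSeries.ext
  intro d
  show MvPowerSeries.coeff (Finsupp.equivMapDomain e d) (MvPowerSeries.C a)
      = MvPowerSeries.coeff d (MvPowerSeries.C a)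
  rw [MvPowerSeries.coeff_C, MvPowerSeries.coeff_C]
  congr 1
  apply propext
  constructor
  · intro h
    refine emd_cancel e _ _ ?_
    rw [h, Finsupp.equivMapDomain_zero]
  · intro h
    rw [h, Finsupp.equivMapDomain_zero]

lemma psReindex_constantCoeff (e : σ ≃ σ) (a : MvPowerSeries σ K) :
    MvPowerSeries.constantCoeff (psReindex e a) = MvPowerSeries.constantCoeff a := by
  show a (Finsupp.equivMapDomain e 0) = a 0
  rw [Finsupp.equivMapDomain_zero]

lemma psReindex_inv (e : σ ≃ σ) (a : MvPowerSeries σ K)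
    (h : MvPowerSeries.constantCoeff a ≠ 0) :
    psReindex e a⁻¹ = (psReindex e a)⁻¹ := by
  have h' : MvPowerSeries.constantCoeff (psReindex e a) ≠ 0 := by
    rwa [psReindex_constantCoeff]
  rw [MvPowerSeries.eq_inv_iff_mul_eq_one h', ← map_mul,
    MvPowerSeries.inv_mul_cancel a h, map_one]

end Reindex

section Theta

variable {n : ℕ} {K : Type*} [Field K]

/-- The involution `(i,j) ↦ (rev j, rev i)` on pairs, i.e. the action of `♣`. -/
def pairRev (n : ℕ) : ThetaPairs n ≃ ThetaPairs n where
  toFun p := ⟨(p.1.2.rev, p.1.1.rev), by simpa [Fin.rev_lt_rev] using p.2⟩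
  invFun p := ⟨(p.1.2.rev, p.1.1.rev), by simpa [Fin.rev_lt_rev] using p.2⟩
  left_inv p := by apply Subtype.ext; simp [Fin.rev_rev]
  right_inv p := by apply Subtype.ext; simp [Fin.rev_rev]

lemma psReindex_theta (q : K) :
    psReindex (pairRev n) (thetaKernel n K q) = thetaKernel n K q := by
  unfold thetaKernel
  rw [map_prod]
  have key : ∀ p : ThetaPairs n,
      psReindex (pairRev n) ((1 - MvPowerSeries.X p) *
        (1 - MvPowerSeries.C q * MvPowerSeries.X p)⁻¹)
      = (1 - MvPowerSeries.X ((pairRev n).symm p)) *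
        (1 - MvPowerSeries.C q * MvPowerSeries.X ((pairRev n).symm p))⁻¹ := by
    intro p
    rw [map_mul, map_sub, map_one, psReindex_X, psReindex_inv, map_sub, map_one, map_mul,
      psReindex_C, psReindex_X]
    simp
  simp only [key]
  exact Fintype.prod_equiv (pairRev n).symm _ _ (fun p => rfl)

lemma coeff_theta_rev (q : K) (d : ThetaPairs n →₀ ℕ) :
    MvPowerSeries.coeff (Finsupp.equivMapDomain (pairRev n) d) (thetaKernel n K q)
      = MvPowerSeries.coeff d (thetaKernel n K q) := by
  conv_rhs => rw [← psReindex_theta (n := n) q]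
  rfl

lemma expVec_rev (d : ThetaPairs n →₀ ℕ) (i : Fin n) :
    expVec (Finsupp.equivMapDomain (pairRev n) d) i = - expVec d (Fin.rev i) := by
  unfold expVec
  rw [← Finset.sum_neg_distrib]
  refine Fintype.sum_equiv (pairRev n) _ _ (fun p => ?_)
  simp only [Finsupp.equivMapDomain_apply, pairRev, Equiv.coe_fn_mk, Equiv.coe_fn_symm_mk,
    Fin.rev_inj]
  ring

lemma ctTheta_rev (q : K) (u : Fin n → ℤ) :
    ctTheta n K q u = ctTheta n K q (fun i => - u (Fin.rev i)) := by
  unfold ctTheta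
  rw [← finsum_comp_equiv (Finsupp.equivCongrLeft (pairRev n))]
  refine finsum_congr fun d => ?_
  have hE : (Finsupp.equivCongrLeft (pairRev n)) d = Finsupp.equivMapDomain (pairRev n) d :=
    Finsupp.equivCongrLeft_apply _ _
  rw [hE, coeff_theta_rev]
  congr 1
  apply propext
  constructor
  · intro h i
    show -u (Fin.rev i) + expVec d i = 0
    have := h (Fin.rev i)
    rw [expVec_rev, Fin.rev_rev] at this
    linarith
  · intro h i
    rw [expVec_rev]
    have := h (Fin.rev i)
    simp only [Fin.rev_rev] at this
    linarith

end Theta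

/-- the bilinear form `(f, g)_q = CT(f g^♣ Θ)` is symmetric. -/
theorem thetaPairing_symm (n : ℕ) (K : Type*) [Field K] (q : K)
    (f g : (Fin n → ℤ) →₀ K) :
    thetaPairing n K q f g = thetaPairing n K q g f := by
  unfold thetaPairing
  rw [Finsupp.sum_comm]
  refine Finsupp.sum_congr fun w _ => Finsupp.sum_congr fun v _ => ?_
  rw [mul_comm (f v) (g w), ctTheta_rev]
  congr 1
  refine congrArg (ctTheta n K q) (funext fun i => ?_)
  rw [Fin.rev_rev]
  ring
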